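/- Let T > 0 and p ∈ [1,∞). Define D ⊆ L^p(0,T) as the set of all equivalence classes u such that there exists s ∈ [0,T] with u = χ_{(0,s)} almost everywhere or u = χ_{(s,T)} almost everywhere (equivalently, D is the set of binary-valued functions of bounded variation on (0,T) with BV-seminorm at most 1, i.e., with at most one switching). Then the function u* defined by u*(t) = 1/2 for t ∈ (T/3, 2T/3) and u*(t) = 0 otherwise does NOT belong to the closure in L^p(0,T) of the convex hull of D. -/

import Mathlib

open MeasureTheory Set Filter
open scoped ENNReal

noncomputable def gfun (A B : ℝ) : ℝ → ℝ :=
  fun t => 1 - 2 * (Ioo A B).indicator (fun _ => (1:ℝ)) t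

lemma gfun_measurable (A B : ℝ) : Measurable (gfun A B) :=
  measurable_const.sub (measurable_const.mul
    (measurable_const.indicator measurableSet_Ioo))

lemma gfun_bound (A B t : ℝ) : ‖gfun A B t‖ ≤ 1 := by
  unfold gfun
  by_cases h : t ∈ Ioo A B <;> simp [h] <;> norm_num

lemma integral_gfun (A B c d : ℝ) :
    ∫ t in Ioo c d, gfun A B t =
      (volume (Ioo c d)).toReal - 2 * (volume (Ioo A B ∩ Ioo c d)).toReal := by
  have h1 : IntegrableOn (fun _ : ℝ => (1:ℝ)) (Ioo c d) volume := by
    refine integrableOn_const ?_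
    simp [Real.volume_Ioo]
  have h2 : Integrable (fun t => (Ioo A B).indicator (fun _ => (1:ℝ)) t)
      (volume.restrict (Ioo c d)) := by
    refine (integrable_indicator_iff measurableSet_Ioo).2 ?_
    refine integrableOn_const ?_
    rw [Measure.restrict_apply measurableSet_Ioo]
    exact (lt_of_le_of_lt (measure_mono inter_subset_left) (by simp [Real.volume_Ioo])).ne
  have h2' := h2.const_mul (2:ℝ)
  unfold gfun
  rw [integral_sub h1 h2', integral_const, integral_const_mul,
    integral_indicator_const _ measurableSet_Ioo,
    measureReal_restrict_apply measurableSet_Ioo, measureReal_restrict_apply_univ]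
  simp [smul_eq_mul, Measure.real]

theorem stmt_2
    (T : ℝ) (hT : 0 < T) (p : ℝ≥0∞) [Fact (1 ≤ p)] (hp : p ≠ ⊤) :
    ¬ ∃ w ∈ closure (convexHull ℝ
        {u : Lp ℝ p (volume.restrict (Ioo (0:ℝ) T)) |
          ∃ s ∈ Icc (0:ℝ) T,
            ((u : ℝ → ℝ) =ᵐ[volume.restrict (Ioo (0:ℝ) T)]
              (Ioo (0:ℝ) s).indicator (fun _ => (1:ℝ))) ∨
            ((u : ℝ → ℝ) =ᵐ[volume.restrict (Ioo (0:ℝ) T)]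
              (Ioo s T).indicator (fun _ => (1:ℝ)))}),
      (w : ℝ → ℝ) =ᵐ[volume.restrict (Ioo (0:ℝ) T)]
        (fun t => if t ∈ Ioo (T/3) (2*T/3) then (1/2 : ℝ) else 0) := by
  set μ : Measure ℝ := volume.restrict (Ioo (0:ℝ) T) with hμ
  rintro ⟨w, hw, hwae⟩
  haveI : IsFiniteMeasure μ := by
    constructor
    rw [hμ, Measure.restrict_apply_univ]
    simp [Real.volume_Ioo]
  have hp1 : (1:ℝ≥0∞) ≤ p := Fact.out
  set g : ℝ → ℝ := gfun (T/3) (2*T/3) with hg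
  -- integrability of g * u
  have hint : ∀ u : Lp ℝ p μ, Integrable (fun x => g x * (u : ℝ → ℝ) x) μ :=
    fun u => ((Lp.memLp u).integrable hp1).bdd_mul
      (gfun_measurable _ _).aestronglyMeasurable (Eventually.of_forall (gfun_bound _ _))
  -- the linear functional
  set Flin : Lp ℝ p μ →ₗ[ℝ] ℝ :=
    { toFun := fun u => ∫ x, g x * (u : ℝ → ℝ) x ∂μ
      map_add' := by
        intro u v
        have h1 : (fun x => g x * ((u + v : Lp ℝ p μ) : ℝ → ℝ) x)
            =ᵐ[μ] fun x => g x * (u : ℝ → ℝ) x + g x * (v : ℝ → ℝ) x := by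
          filter_upwards [Lp.coeFn_add u v] with x hx
          rw [hx]; simp [mul_add]
        rw [integral_congr_ae h1, integral_add (hint u) (hint v)]
      map_smul' := by
        intro c u
        have h1 : (fun x => g x * ((c • u : Lp ℝ p μ) : ℝ → ℝ) x)
            =ᵐ[μ] fun x => c * (g x * (u : ℝ → ℝ) x) := by
          filter_upwards [Lp.coeFn_smul c u] with x hx
          rw [hx]; simp; ring
        rw [integral_congr_ae h1, integral_const_mul]
        rfl } with hFlin
  -- norm bound
  set K : ℝ := ((μ Set.univ) ^ (1 - 1/p.toReal)).toReal with hK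
  have hptr : 1 ≤ p.toReal := by
    rw [← ENNReal.toReal_one]
    exact ENNReal.toReal_mono hp hp1
  have hbound : ∀ u : Lp ℝ p μ, ‖Flin u‖ ≤ K * ‖u‖ := by
    intro u
    have h0 : ‖Flin u‖ ≤ ∫ x, ‖(u : ℝ → ℝ) x‖ ∂μ := by
      refine (norm_integral_le_integral_norm _).trans ?_
      refine integral_mono (hint u).norm ((Lp.memLp u).integrable hp1).norm ?_
      intro x
      simp only [norm_mul]
      calc ‖g x‖ * ‖(u : ℝ → ℝ) x‖ ≤ 1 * ‖(u : ℝ → ℝ) x‖ :=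
            mul_le_mul_of_nonneg_right (gfun_bound _ _ _) (norm_nonneg _)
        _ = ‖(u : ℝ → ℝ) x‖ := one_mul _
    have h1 : ∫ x, ‖(u : ℝ → ℝ) x‖ ∂μ = (eLpNorm (u : ℝ → ℝ) 1 μ).toReal := by
      rw [integral_norm_eq_lintegral_enorm (Lp.aestronglyMeasurable u),
        eLpNorm_one_eq_lintegral_enorm]
    have h2 : eLpNorm (u : ℝ → ℝ) 1 μ ≤ eLpNorm (u : ℝ → ℝ) p μ * (μ Set.univ) ^ (1 - 1/p.toReal) := by
      have := eLpNorm_le_eLpNorm_mul_rpow_measure_univ hp1 (Lp.aestronglyMeasurable u)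
      simpa using this
    have hKfin : (μ Set.univ) ^ (1 - 1/p.toReal) ≠ ⊤ := by
      refine ENNReal.rpow_ne_top_of_nonneg ?_ (measure_ne_top μ _)
      have : 1/p.toReal ≤ 1 := by
        rw [div_le_one (by linarith)]
        exact hptr
      linarith
    have h3 : (eLpNorm (u : ℝ → ℝ) 1 μ).toReal ≤ K * ‖u‖ := by
      have := ENNReal.toReal_mono (by
        exact ENNReal.mul_ne_top (Lp.eLpNorm_ne_top u) hKfin) h2
      rw [ENNReal.toReal_mul] at this
      rw [Lp.norm_def]
      rw [mul_comm] at this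
      exact this
    calc ‖Flin u‖ ≤ ∫ x, ‖(u : ℝ → ℝ) x‖ ∂μ := h0
      _ = (eLpNorm (u : ℝ → ℝ) 1 μ).toReal := h1
      _ ≤ K * ‖u‖ := h3
  set Fclm : Lp ℝ p μ →L[ℝ] ℝ := Flin.mkContinuous K hbound with hFclm
  have hFapp : ∀ u : Lp ℝ p μ, Fclm u = ∫ x, g x * (u : ℝ → ℝ) x ∂μ := fun u => rfl
  -- value of F on indicators of intervals inside (0,T)
  have key : ∀ c d : ℝ, 0 ≤ c → d ≤ T →
      ∫ x, g x * (Ioo c d).indicator (fun _ => (1:ℝ)) x ∂μ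
        = (volume (Ioo c d)).toReal
          - 2 * (volume (Ioo (T/3) (2*T/3) ∩ Ioo c d)).toReal := by
    intro c d hc hd
    have h1 : (fun x => g x * (Ioo c d).indicator (fun _ => (1:ℝ)) x)
        = (Ioo c d).indicator g := by
      funext x; by_cases hx : x ∈ Ioo c d <;> simp [hx]
    rw [h1, integral_indicator measurableSet_Ioo, hμ,
      Measure.restrict_restrict measurableSet_Ioo, Ioo_inter_Ioo,
      max_eq_left hc, min_eq_left hd]
    exact integral_gfun _ _ _ _
  -- the closed convex set
  have hDsub : {u : Lp ℝ p μ |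
      ∃ s ∈ Icc (0:ℝ) T,
        ((u : ℝ → ℝ) =ᵐ[μ] (Ioo (0:ℝ) s).indicator (fun _ => (1:ℝ))) ∨
        ((u : ℝ → ℝ) =ᵐ[μ] (Ioo s T).indicator (fun _ => (1:ℝ)))}
      ⊆ Fclm ⁻¹' Ici 0 := by
    rintro u ⟨s, hs, (h | h)⟩ <;>
      [ (have heq : Fclm u = ∫ x, g x * (Ioo (0:ℝ) s).indicator (fun _ => (1:ℝ)) x ∂μ := by
          rw [hFapp]
          exact integral_congr_ae ((h.mono fun x hx => by dsimp only; rw [hx]))) ;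
        (have heq : Fclm u = ∫ x, g x * (Ioo s T).indicator (fun _ => (1:ℝ)) x ∂μ := by
          rw [hFapp]
          exact integral_congr_ae ((h.mono fun x hx => by dsimp only; rw [hx]))) ]
    · rw [Set.mem_preimage, Set.mem_Ici, heq, key 0 s le_rfl hs.2]
      rw [Real.volume_Ioo, Ioo_inter_Ioo, Real.volume_Ioo, max_eq_left (by linarith : (0:ℝ) ≤ T/3)]
      rw [ENNReal.toReal_ofReal (by linarith [hs.1] : (0:ℝ) ≤ s - 0)]
      rcases le_total s (T/3) with h1 | h1
      · rw [min_eq_right (by linarith : s ≤ 2*T/3),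
          ENNReal.ofReal_eq_zero.2 (by linarith : s - T/3 ≤ 0)]
        simp
        linarith [hs.1]
      · rcases le_total s (2*T/3) with h2 | h2
        · rw [min_eq_right h2, ENNReal.toReal_ofReal (by linarith : (0:ℝ) ≤ s - T/3)]
          linarith
        · rw [min_eq_left h2, ENNReal.toReal_ofReal (by linarith : (0:ℝ) ≤ 2*T/3 - T/3)]
          linarith
    · rw [Set.mem_preimage, Set.mem_Ici, heq, key s T hs.1 le_rfl]
      rw [Real.volume_Ioo, Ioo_inter_Ioo, Real.volume_Ioo,
        min_eq_left (by linarith : 2*T/3 ≤ T)]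
      rw [ENNReal.toReal_ofReal (by linarith [hs.2] : (0:ℝ) ≤ T - s)]
      rcases le_total s (T/3) with h1 | h1
      · rw [max_eq_left h1, ENNReal.toReal_ofReal (by linarith : (0:ℝ) ≤ 2*T/3 - T/3)]
        linarith
      · rcases le_total s (2*T/3) with h2 | h2
        · rw [max_eq_right h1, ENNReal.toReal_ofReal (by linarith : (0:ℝ) ≤ 2*T/3 - s)]
          linarith
        · rw [max_eq_right h1, ENNReal.ofReal_eq_zero.2 (by linarith : 2*T/3 - s ≤ 0)]
          simp
          linarith [hs.2]
  have hconv : Convex ℝ (Fclm ⁻¹' Ici 0) := (convex_Ici (0:ℝ)).linear_preimage Flin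
  have hclosed : IsClosed (Fclm ⁻¹' Ici 0) := isClosed_Ici.preimage Fclm.continuous
  have hwmem : w ∈ Fclm ⁻¹' Ici 0 :=
    closure_minimal (convexHull_min hDsub hconv) hclosed hw
  have hwF : (0:ℝ) ≤ Fclm w := hwmem
  -- compute F w
  have hprod : (fun x => g x * (if x ∈ Ioo (T/3) (2*T/3) then (1/2:ℝ) else 0))
      = (Ioo (T/3) (2*T/3)).indicator (fun _ => (-(1/2) : ℝ)) := by
    funext x
    by_cases hx : x ∈ Ioo (T/3) (2*T/3) <;> simp [hx, gfun, hg] <;> norm_num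
  have hFw : Fclm w = -(T/6) := by
    rw [hFapp]
    have h1 : (fun x => g x * (w : ℝ → ℝ) x)
        =ᵐ[μ] (Ioo (T/3) (2*T/3)).indicator (fun _ => (-(1/2) : ℝ)) := by
      filter_upwards [hwae] with x hx
      rw [hx]
      exact congrFun hprod x
    rw [integral_congr_ae h1, integral_indicator_const _ measurableSet_Ioo, hμ,
      measureReal_restrict_apply measurableSet_Ioo, Ioo_inter_Ioo,
      max_eq_left (by linarith : (0:ℝ) ≤ T/3), min_eq_left (by linarith : 2*T/3 ≤ T),
      Real.volume_real_Ioo_of_le (by linarith : T/3 ≤ 2*T/3)]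
    simp
    ring
  rw [hFw] at hwF
  linarith
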